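/- Let N > 2, D > 0 and h > 0, and define Φ : (0,h] → ℝ by Φ(θ) = 2θ + D·(θ² − (N/(N−2))·h² + (2/(N−2))·h^N·θ^{2−N}). Then Φ is convex on (0,h], Φ'(θ) → −∞ as θ ↓ 0 and Φ'(h) = 2 > 0; there exists a unique θ₀ ∈ (0,h) satisfying θ₀^{N−1} = D·(h^N − θ₀^N); Φ attains its minimum over (0,h] at θ₀; and the minimum value satisfies Φ(θ₀) ≤ 2·((N−1)/(N−2))·(D·h^N)^{1/(N−1)}. -/

import Mathlib

open Real Filter

/-- Properties of `Φ(θ) = 2θ + D·(θ² − (N/(N−2))·h² + (2/(N−2))·h^N·θ^{2−N})` for `N > 2`: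
convexity on `(0,h]`, derivative `Φ'(θ) = 2 + 2Dθ − 2D·h^N·θ^{1−N}` with `Φ' → −∞` at `0⁺`
and `Φ'(h) = 2`, existence and uniqueness of the critical point
`θ₀ ∈ (0,h)` with `θ₀^{N−1} = D·(h^N − θ₀^N)`, minimality of `Φ` at `θ₀`, and the bound
`Φ(θ₀) ≤ 2·((N−1)/(N−2))·(D·h^N)^{1/(N−1)}`. -/
theorem phi_min_gt_two (N D h : ℝ) (hN : 2 < N) (hD : 0 < D) (hh : 0 < h) :
    let Φ : ℝ → ℝ := fun θ =>
      2 * θ + D * (θ ^ 2 - (N / (N - 2)) * h ^ 2 + (2 / (N - 2)) * h ^ N * θ ^ (2 - N))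
    let Φ' : ℝ → ℝ := fun θ => 2 + 2 * D * θ - 2 * D * h ^ N * θ ^ (1 - N)
    ConvexOn ℝ (Set.Ioc 0 h) Φ ∧
    (∀ θ ∈ Set.Ioc (0 : ℝ) h, HasDerivAt Φ (Φ' θ) θ) ∧
    Tendsto Φ' (nhdsWithin 0 (Set.Ioi 0)) atBot ∧
    Φ' h = 2 ∧
    (∃! θ₀ : ℝ, θ₀ ∈ Set.Ioo 0 h ∧ θ₀ ^ (N - 1) = D * (h ^ N - θ₀ ^ N)) ∧
    (∀ θ₀ : ℝ, θ₀ ∈ Set.Ioo 0 h → θ₀ ^ (N - 1) = D * (h ^ N - θ₀ ^ N) →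
      (∀ θ ∈ Set.Ioc (0 : ℝ) h, Φ θ₀ ≤ Φ θ) ∧
      Φ θ₀ ≤ 2 * ((N - 1) / (N - 2)) * (D * h ^ N) ^ (1 / (N - 1))) := by
  intro Φ Φ'
  have hN2 : (0:ℝ) < N - 2 := by linarith
  have hN2' : N - 2 ≠ 0 := ne_of_gt hN2
  have hN1 : (0:ℝ) < N - 1 := by linarith
  have hN1' : N - 1 ≠ 0 := ne_of_gt hN1
  have hhN : 0 < h ^ N := Real.rpow_pos_of_pos hh N
  -- derivative
  have hderiv : ∀ θ : ℝ, 0 < θ → HasDerivAt Φ (Φ' θ) θ := by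
    intro θ hθ
    have h1 : HasDerivAt (fun x : ℝ => x ^ (2 - N)) ((2 - N) * θ ^ (1 - N)) θ := by
      have := Real.hasDerivAt_rpow_const (x := θ) (p := 2 - N) (Or.inl hθ.ne')
      rwa [show (2 - N - 1) = 1 - N by ring] at this
    have h2 : HasDerivAt Φ
        (2 * 1 + D * (2 * θ ^ 1 + (2 / (N - 2)) * h ^ N * ((2 - N) * θ ^ (1 - N)))) θ :=
      ((hasDerivAt_id θ).const_mul 2).add
        ((((hasDerivAt_pow 2 θ).sub_const _).add (h1.const_mul _)).const_mul D)
    convert h2 using 1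
    field_simp
    ring
  -- second derivative of Φ', for convexity
  have hderiv2 : ∀ θ : ℝ, 0 < θ →
      HasDerivAt Φ' (2 * D + 2 * D * h ^ N * (N - 1) * θ ^ (-N)) θ := by
    intro θ hθ
    have h1 : HasDerivAt (fun x : ℝ => x ^ (1 - N)) ((1 - N) * θ ^ (-N)) θ := by
      have := Real.hasDerivAt_rpow_const (x := θ) (p := 1 - N) (Or.inl hθ.ne')
      rwa [show (1 - N - 1) = -N by ring] at this
    have h2 : HasDerivAt Φ'
        (0 + 2 * D * 1 - 2 * D * h ^ N * ((1 - N) * θ ^ (-N))) θ :=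
      ((hasDerivAt_const θ 2).add ((hasDerivAt_id θ).const_mul (2 * D))).sub
        (h1.const_mul _)
    convert h2 using 1
    ring
  -- convexity
  have hconv : ConvexOn ℝ (Set.Ioc 0 h) Φ := by
    have hIoi : ConvexOn ℝ (Set.Ioi (0:ℝ)) Φ := by
      apply convexOn_of_hasDerivWithinAt2_nonneg (f' := Φ')
        (f'' := fun θ => 2 * D + 2 * D * h ^ N * (N - 1) * θ ^ (-N)) (convex_Ioi 0)
      · exact fun x hx => ((hderiv x hx).continuousAt).continuousWithinAt
      · intro x hx
        rw [interior_Ioi] at hx ⊢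
        exact (hderiv x hx).hasDerivWithinAt
      · intro x hx
        rw [interior_Ioi] at hx ⊢
        exact (hderiv2 x hx).hasDerivWithinAt
      · intro x hx
        rw [interior_Ioi] at hx
        have h0 : (0:ℝ) ≤ x ^ (-N) := Real.rpow_nonneg (le_of_lt hx) _
        have := mul_nonneg (mul_nonneg (mul_nonneg
          (by linarith : (0:ℝ) ≤ 2 * D) hhN.le) hN1.le) h0
        linarith
    exact hIoi.subset Set.Ioc_subset_Ioi_self (convex_Ioc 0 h)
  refine ⟨hconv, fun θ hθ => hderiv θ hθ.1, ?_, ?_, ?_, ?_⟩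
  -- tendsto atBot
  · have h1 : Tendsto (fun θ : ℝ => θ ^ (N - 1)) (nhdsWithin 0 (Set.Ioi 0))
        (nhdsWithin 0 (Set.Ioi 0)) := by
      apply tendsto_nhdsWithin_of_tendsto_nhds_of_eventually_within
      · have := (Real.continuousAt_rpow_const 0 (N - 1) (Or.inr hN1.le)).tendsto
        rw [Real.zero_rpow hN1'] at this
        exact this.mono_left nhdsWithin_le_nhds
      · exact eventually_nhdsWithin_of_forall fun x hx => Real.rpow_pos_of_pos hx _
    have h2 : Tendsto (fun θ : ℝ => θ ^ (1 - N)) (nhdsWithin 0 (Set.Ioi 0)) atTop := by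
      refine (tendsto_inv_nhdsGT_zero.comp h1).congr' ?_
      filter_upwards [self_mem_nhdsWithin] with x (hx : 0 < x)
      simp only [Function.comp]
      rw [← Real.rpow_neg hx.le, show -(N - 1) = 1 - N by ring]
    have h3 : Tendsto (fun θ : ℝ => 2 * D * h ^ N * θ ^ (1 - N))
        (nhdsWithin 0 (Set.Ioi 0)) atTop := by
      exact h2.const_mul_atTop (by positivity)
    have h4 : Tendsto (fun θ : ℝ => 2 + 2 * D * θ) (nhdsWithin 0 (Set.Ioi 0))
        (nhds (2 + 2 * D * 0)) := by
      exact (Filter.Tendsto.const_mul _ (tendsto_id.mono_left nhdsWithin_le_nhds)).const_add 2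
    have h5 := h4.add_atBot (tendsto_neg_atTop_atBot.comp h3)
    refine h5.congr (fun x => ?_)
    show 2 + 2 * D * x + -(2 * D * h ^ N * x ^ (1 - N))
      = 2 + 2 * D * x - 2 * D * h ^ N * x ^ (1 - N)
    ring
  -- Φ' h = 2
  · show 2 + 2 * D * h - 2 * D * h ^ N * h ^ (1 - N) = 2
    have : h ^ N * h ^ (1 - N) = h := by
      rw [← Real.rpow_add hh, show N + (1 - N) = 1 by ring, Real.rpow_one]
    linear_combination (-2 * D) * this
  -- existence and uniqueness of θ₀
  · have gmono : ∀ x y : ℝ, 0 ≤ x → x < y →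
        x ^ (N - 1) + D * x ^ N < y ^ (N - 1) + D * y ^ N := by
      intro x y hx hxy
      have h1 := Real.rpow_lt_rpow hx hxy hN1
      have h2 := Real.rpow_lt_rpow hx hxy (by linarith : (0:ℝ) < N)
      nlinarith
    have gcont : ContinuousOn (fun x : ℝ => x ^ (N - 1) + D * x ^ N) (Set.Icc 0 h) := by
      apply ContinuousOn.add
      · exact fun x _ => (Real.continuousAt_rpow_const x _ (Or.inr hN1.le)).continuousWithinAt
      · exact fun x _ => ((Real.continuousAt_rpow_const x _
          (Or.inr (by linarith))).const_smul D).continuousWithinAt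
    have g0 : (0:ℝ) ^ (N - 1) + D * (0:ℝ) ^ N = 0 := by
      rw [Real.zero_rpow hN1', Real.zero_rpow (by linarith : N ≠ 0)]; ring
    have hmem : D * h ^ N ∈ Set.Ioo ((0:ℝ) ^ (N - 1) + D * (0:ℝ) ^ N)
        (h ^ (N - 1) + D * h ^ N) := by
      rw [g0]
      constructor
      · positivity
      · have : 0 < h ^ (N - 1) := Real.rpow_pos_of_pos hh _
        linarith
    obtain ⟨θ₀, hθ₀mem, hθ₀eq⟩ := intermediate_value_Ioo hh.le gcont hmem
    refine ⟨θ₀, ⟨hθ₀mem, by dsimp only at hθ₀eq; nlinarith⟩, ?_⟩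
    rintro y ⟨hymem, hyeq⟩
    by_contra hne
    rcases lt_or_gt_of_ne hne with hlt | hlt
    · have := gmono y θ₀ hymem.1.le hlt
      dsimp only at hθ₀eq; nlinarith
    · have := gmono θ₀ y hθ₀mem.1.le hlt
      dsimp only at hθ₀eq; nlinarith
  -- minimality and bound
  · intro θ₀ hθ₀mem hθ₀eq
    obtain ⟨hθ₀pos, hθ₀h⟩ := hθ₀mem
    have hDhN : D * h ^ N = θ₀ ^ (N - 1) + D * θ₀ ^ N := by linarith
    -- sign of Φ'
    have hsign : ∀ x : ℝ, 0 < x →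
        Φ' x = 2 * x ^ (1 - N) * (x ^ (N - 1) + D * x ^ N - D * h ^ N) := by
      intro x hx
      have e1 : x ^ (1 - N) * x ^ (N - 1) = 1 := by
        rw [← Real.rpow_add hx, show (1 - N) + (N - 1) = 0 by ring, Real.rpow_zero]
      have e2 : x ^ (1 - N) * x ^ N = x := by
        rw [← Real.rpow_add hx, show (1 - N) + N = 1 by ring, Real.rpow_one]
      show 2 + 2 * D * x - 2 * D * h ^ N * x ^ (1 - N) = _
      linear_combination (-2) * e1 - 2 * D * e2
    have gmono : ∀ x y : ℝ, 0 ≤ x → x ≤ y →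
        x ^ (N - 1) + D * x ^ N ≤ y ^ (N - 1) + D * y ^ N := by
      intro x y hx hxy
      have h1 := Real.rpow_le_rpow hx hxy hN1.le
      have h2 := Real.rpow_le_rpow hx hxy (by linarith : (0:ℝ) ≤ N)
      nlinarith
    constructor
    · intro θ hθ
      rcases le_total θ θ₀ with hle | hle
      · -- antitone on Ioc 0 θ₀
        have hanti : AntitoneOn Φ (Set.Ioc 0 θ₀) := by
          apply antitoneOn_of_hasDerivWithinAt_nonpos (f' := Φ') (convex_Ioc 0 θ₀)
          · exact fun x hx => ((hderiv x hx.1).continuousAt).continuousWithinAt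
          · intro x hx
            rw [interior_Ioc] at hx ⊢
            exact (hderiv x hx.1).hasDerivWithinAt
          · intro x hx
            rw [interior_Ioc] at hx
            rw [hsign x hx.1]
            have h1 : x ^ (N - 1) + D * x ^ N ≤ D * h ^ N := by
              rw [hDhN]; exact gmono x θ₀ hx.1.le hx.2.le
            have h2 : (0:ℝ) ≤ x ^ (1 - N) := Real.rpow_nonneg hx.1.le _
            nlinarith
        exact hanti ⟨hθ.1, hle⟩ ⟨hθ₀pos, le_refl _⟩ hle
      · -- monotone on Icc θ₀ h
        have hmono : MonotoneOn Φ (Set.Icc θ₀ h) := by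
          apply monotoneOn_of_hasDerivWithinAt_nonneg (f' := Φ') (convex_Icc θ₀ h)
          · exact fun x hx => ((hderiv x (lt_of_lt_of_le hθ₀pos hx.1)).continuousAt).continuousWithinAt
          · intro x hx
            rw [interior_Icc] at hx ⊢
            exact (hderiv x (lt_trans hθ₀pos hx.1)).hasDerivWithinAt
          · intro x hx
            rw [interior_Icc] at hx
            have hx0 : 0 < x := lt_trans hθ₀pos hx.1
            rw [hsign x hx0]
            have h1 : D * h ^ N ≤ x ^ (N - 1) + D * x ^ N := by
              rw [hDhN]; exact gmono θ₀ x hθ₀pos.le hx.1.le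
            have h2 : (0:ℝ) ≤ x ^ (1 - N) := Real.rpow_nonneg hx0.le _
            nlinarith
        exact hmono ⟨le_refl _, hθ₀h.le⟩ ⟨hle, hθ.2⟩ hle
    · -- the bound
      have e1 : θ₀ ^ (2 - N) * θ₀ ^ (N - 1) = θ₀ := by
        rw [← Real.rpow_add hθ₀pos, show (2 - N) + (N - 1) = 1 by ring, Real.rpow_one]
      have e2 : θ₀ ^ (2 - N) * θ₀ ^ N = θ₀ ^ 2 := by
        rw [← Real.rpow_add hθ₀pos, show (2 - N) + N = (2:ℝ) by ring,
          show (2:ℝ) = ((2:ℕ):ℝ) by norm_num, Real.rpow_natCast]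
      have hkey : D * (h ^ N * θ₀ ^ (2 - N)) = θ₀ + D * θ₀ ^ 2 := by
        linear_combination θ₀ ^ (2 - N) * hDhN + e1 + D * e2
      have hsq : θ₀ ^ 2 ≤ h ^ 2 := by nlinarith
      have step1 : Φ θ₀ ≤ 2 * ((N - 1) / (N - 2)) * θ₀ := by
        rw [← mul_le_mul_iff_right₀ hN2]
        show (N - 2) * (2 * θ₀ + D * (θ₀ ^ 2 - (N / (N - 2)) * h ^ 2 +
          (2 / (N - 2)) * h ^ N * θ₀ ^ (2 - N))) ≤ _
        have expand : (N - 2) * (2 * θ₀ + D * (θ₀ ^ 2 - (N / (N - 2)) * h ^ 2 +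
            (2 / (N - 2)) * h ^ N * θ₀ ^ (2 - N)))
            = 2 * (N - 2) * θ₀ + (N - 2) * D * θ₀ ^ 2 - N * D * h ^ 2
              + 2 * (D * (h ^ N * θ₀ ^ (2 - N))) := by
          field_simp
          ring
        have expand2 : (N - 2) * (2 * ((N - 1) / (N - 2)) * θ₀) = 2 * (N - 1) * θ₀ := by
          field_simp
        rw [expand, hkey, expand2]
        nlinarith [mul_le_mul_of_nonneg_left hsq (show (0:ℝ) ≤ N * D by positivity)]
      have step2 : θ₀ ≤ (D * h ^ N) ^ (1 / (N - 1)) := by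
        have h1 : θ₀ ^ (N - 1) ≤ D * h ^ N := by
          have : 0 < D * θ₀ ^ N := by
            have := Real.rpow_pos_of_pos hθ₀pos N; positivity
          linarith [hDhN]
        have h2 := Real.rpow_le_rpow (Real.rpow_nonneg hθ₀pos.le _) h1
          (by positivity : (0:ℝ) ≤ 1 / (N - 1))
        rwa [← Real.rpow_mul hθ₀pos.le, mul_one_div, div_self hN1',
          Real.rpow_one] at h2
      calc Φ θ₀ ≤ 2 * ((N - 1) / (N - 2)) * θ₀ := step1
        _ ≤ 2 * ((N - 1) / (N - 2)) * (D * h ^ N) ^ (1 / (N - 1)) := by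
            apply mul_le_mul_of_nonneg_left step2 (by positivity)
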